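/- For the Johnson scheme J(n,k), if f is a Boolean function whose characteristic vector lies in V_0 + V_1, then the size |f| (number of k-sets S with f(S)=1) is divisible by binom(n-1,k-1)/gcd(k, binom(n-1,k-1)); in particular, |f| · k / binom(n-1,k-1) is an integer. For example, on J(10,4) the size of any such function is divisible by 21. -/

import Mathlib

open Matrix
/-- The Johnson scheme `J(n,k)`: the `k`-element subsets of an `n`-element set. -/
def JDom (n k : ℕ) := {S : Finset (Fin n) // S.card = k}

instance (n k : ℕ) : Fintype (JDom n k) :=
  inferInstanceAs (Fintype {S : Finset (Fin n) // S.card = k})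

/-- A Boolean function on `J(n,k)` has degree 1 if
`f(S) = c + ∑_{i ∈ S} c_i` for real constants `c, c_1, …, c_n`. -/
def JDegOne {n k : ℕ} (f : JDom n k → Bool) : Prop :=
  ∃ (c : ℝ) (C : Fin n → ℝ), ∀ S : JDom n k,
    (if f S then (1 : ℝ) else 0) = c + ∑ i ∈ S.val, C i

/-- A Boolean function on `J(n,k)` is trivial if it is constant, or the indicator
`S ↦ 1_{i ∈ S}` of a coordinate, or its complement `S ↦ 1_{i ∉ S}`. -/
def JTrivial {n k : ℕ} (f : JDom n k → Bool) : Prop :=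
  (∃ b : Bool, ∀ S, f S = b) ∨
  (∃ i : Fin n, ∀ S : JDom n k, (f S = true ↔ i ∈ S.val)) ∨
  (∃ i : Fin n, ∀ S : JDom n k, (f S = true ↔ i ∉ S.val))

lemma johnson_rowsum {n k : ℕ} (hk : 1 ≤ k) (hkn : k < n) (S : Finset (Fin n)) (hS : S.card = k) :
    k * (n - k) =
      (Finset.univ.filter (fun T : JDom n k => (S ∩ T.val).card = k - 1)).card := by
  have key : (S ×ˢ Sᶜ).card =
      (Finset.univ.filter (fun T : JDom n k => (S ∩ T.val).card = k - 1)).card :=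
   Finset.card_bij
    (i := fun (p : Fin n × Fin n) (hp : p ∈ S ×ˢ Sᶜ) =>
      (⟨insert p.2 (S.erase p.1), by
        have h1 : p.1 ∈ S := (Finset.mem_product.mp hp).1
        have h2 : p.2 ∉ S := Finset.mem_compl.mp (Finset.mem_product.mp hp).2
        rw [Finset.card_insert_of_notMem (by simp [Finset.mem_erase]; exact fun _ => h2),
          Finset.card_erase_of_mem h1, hS]
        omega⟩ : JDom n k))
    (by
      intro p hp
      have h1 : p.1 ∈ S := (Finset.mem_product.mp hp).1
      have h2 : p.2 ∉ S := Finset.mem_compl.mp (Finset.mem_product.mp hp).2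
      refine Finset.mem_filter.mpr ⟨Finset.mem_univ _, show (S ∩ insert p.2 (S.erase p.1)).card = k - 1 from ?_⟩
      have : S ∩ insert p.2 (S.erase p.1) = S.erase p.1 := by
        ext x
        simp only [Finset.mem_inter, Finset.mem_insert, Finset.mem_erase]
        constructor
        · rintro ⟨hxS, (rfl | h)⟩
          · exact absurd hxS h2
          · exact h
        · rintro ⟨hxi, hxS⟩; exact ⟨hxS, Or.inr ⟨hxi, hxS⟩⟩
      rw [this, Finset.card_erase_of_mem h1, hS])
    (by
      intro p hp q hq heq
      have hp1 : p.1 ∈ S := (Finset.mem_product.mp hp).1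
      have hp2 : p.2 ∉ S := Finset.mem_compl.mp (Finset.mem_product.mp hp).2
      have hq1 : q.1 ∈ S := (Finset.mem_product.mp hq).1
      have hq2 : q.2 ∉ S := Finset.mem_compl.mp (Finset.mem_product.mp hq).2
      have heq' : insert p.2 (S.erase p.1) = insert q.2 (S.erase q.1) :=
        congrArg Subtype.val heq
      have hjj : p.2 = q.2 := by
        have : p.2 ∈ insert q.2 (S.erase q.1) := heq' ▸ Finset.mem_insert_self _ _
        rcases Finset.mem_insert.mp this with h | h
        · exact h
        · exact absurd (Finset.mem_of_mem_erase h) hp2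
      have hii : p.1 = q.1 := by
        by_contra hne
        have hmem : q.1 ∈ insert p.2 (S.erase p.1) :=
          Finset.mem_insert_of_mem (Finset.mem_erase.mpr ⟨fun h => hne h.symm, hq1⟩)
        rw [heq'] at hmem
        rcases Finset.mem_insert.mp hmem with h | h
        · exact hq2 (h ▸ hq1)
        · exact (Finset.mem_erase.mp h).1 rfl
      exact Prod.ext hii hjj)
    (by
      intro T hT
      replace hT := (Finset.mem_filter.mp hT).2
      have h1 : (S \ T.val).card = 1 := by
        have := Finset.card_inter_add_card_sdiff S T.val
        omega
      have h2 : (T.val \ S).card = 1 := by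
        have := Finset.card_inter_add_card_sdiff T.val S
        rw [Finset.inter_comm] at this
        have hTc := T.2
        omega
      obtain ⟨i, hi⟩ := Finset.card_eq_one.mp h1
      obtain ⟨j, hj⟩ := Finset.card_eq_one.mp h2
      have hiS : i ∈ S ∧ i ∉ T.val := by
        have : i ∈ S \ T.val := hi ▸ Finset.mem_singleton_self i
        simpa using this
      have hjT : j ∈ T.val ∧ j ∉ S := by
        have : j ∈ T.val \ S := hj ▸ Finset.mem_singleton_self j
        simpa using this
      refine ⟨(i, j), Finset.mem_product.mpr ⟨hiS.1, Finset.mem_compl.mpr hjT.2⟩, ?_⟩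
      apply Subtype.ext
      show insert j (S.erase i) = T.val
      ext x
      simp only [Finset.mem_insert, Finset.mem_erase]
      constructor
      · rintro (rfl | ⟨hxi, hxS⟩)
        · exact hjT.1
        · by_contra hxT
          have : x ∈ S \ T.val := Finset.mem_sdiff.mpr ⟨hxS, hxT⟩
          rw [hi, Finset.mem_singleton] at this
          exact hxi this
      · intro hxT
        by_cases hxS : x ∈ S
        · right
          refine ⟨?_, hxS⟩
          rintro rfl
          exact hiS.2 hxT
        · left
          have : x ∈ T.val \ S := Finset.mem_sdiff.mpr ⟨hxT, hxS⟩
          rw [hj, Finset.mem_singleton] at this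
          exact this)
  rw [← key, Finset.card_product, Finset.card_compl, hS, Fintype.card_fin]


lemma div_gcd_dvd_of_dvd_mul {d k m : ℕ} (hd : 0 < d) (h : d ∣ m * k) :
    d / Nat.gcd k d ∣ m := by
  set g := Nat.gcd k d with hg
  have hg0 : 0 < g := Nat.gcd_pos_of_pos_right _ hd
  have hkg : g ∣ k := Nat.gcd_dvd_left _ _
  have hdg : g ∣ d := Nat.gcd_dvd_right _ _
  have h1 : d / g ∣ m * (k / g) := by
    obtain ⟨c, hc⟩ := h
    refine ⟨c, ?_⟩
    apply Nat.eq_of_mul_eq_mul_left hg0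
    calc g * (m * (k / g)) = m * (g * (k / g)) := by ring
      _ = m * k := by rw [Nat.mul_div_cancel' hkg]
      _ = d * c := hc
      _ = g * (d / g) * c := by rw [Nat.mul_div_cancel' hdg]
      _ = g * (d / g * c) := by ring
  have hcop : Nat.Coprime (d / g) (k / g) := (Nat.coprime_div_gcd_div_gcd hg0).symm
  exact hcop.dvd_of_dvd_mul_right h1


/-- For the Johnson scheme `J(n,k)`, if `f` is a Boolean function
whose characteristic vector lies in `V₀ + V₁` (decomposition with respect to the
distance-1 adjacency matrix, whose eigenvalues on `V₀` and `V₁` are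
`k(n−k)` and `(k−1)(n−k−1) − 1`), then `binom(n−1,k−1)/gcd(k, binom(n−1,k−1))`
divides `|f|`; in particular `|f| · k / binom(n−1,k−1)` is an integer. -/
theorem johnson_size_divisibility (n k : ℕ) (hk : 1 ≤ k) (hkn : k < n)
    (f : JDom n k → Bool)
    (A : Matrix (JDom n k) (JDom n k) ℝ)
    (hA : ∀ S T : JDom n k,
      A S T = if (S.val ∩ T.val).card = k - 1 then (1 : ℝ) else 0)
    (hdecomp : ∃ (α : ℝ) (v : JDom n k → ℝ),
      A *ᵥ v = (((k : ℝ) - 1) * ((n : ℝ) - (k : ℝ) - 1) - 1) • v ∧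
      (∑ S, v S = 0) ∧
      ∀ S, (if f S then (1 : ℝ) else 0) = α + v S) :
    (Nat.choose (n - 1) (k - 1) / Nat.gcd k (Nat.choose (n - 1) (k - 1))) ∣
        Nat.card {S : JDom n k // f S = true} ∧
      Nat.choose (n - 1) (k - 1) ∣ Nat.card {S : JDom n k // f S = true} * k := by
  classical
  obtain ⟨α, v, hEig, hsum, hf⟩ := hdecomp
  set C := Nat.choose (n - 1) (k - 1) with hCdef
  set N := Nat.choose n k with hNdef
  have hCpos : 0 < C := Nat.choose_pos (by omega)
  have hNpos : 0 < N := Nat.choose_pos hkn.le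
  set m := Nat.card {S : JDom n k // f S = true} with hmdef
  have hmcard : m = (Finset.univ.filter (fun S : JDom n k => f S = true)).card := by
    rw [hmdef, Nat.card_eq_fintype_card, Fintype.card_subtype]
  have hNcard : (Finset.univ : Finset (JDom n k)).card = N := by
    have h := Fintype.card_finset_len (α := Fin n) k
    rw [Fintype.card_fin] at h
    rw [Finset.card_univ]
    exact h
  -- key binomial identity
  have hkey : n * C = N * k := by
    have h := Nat.add_one_mul_choose_eq (n - 1) (k - 1)
    have h1 : n - 1 + 1 = n := by omega
    have h2 : k - 1 + 1 = k := by omega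
    simp only [Nat.succ_eq_add_one, h1, h2] at h
    exact h
  -- |f| = α N
  have hmr : (m : ℝ) = α * N := by
    have hs : ∑ S : JDom n k, (if f S then (1 : ℝ) else 0) = α * N := by
      calc ∑ S : JDom n k, (if f S then (1 : ℝ) else 0)
          = ∑ S : JDom n k, (α + v S) := Finset.sum_congr rfl fun S _ => hf S
        _ = (Finset.univ : Finset (JDom n k)).card • α + ∑ S, v S := by
            rw [Finset.sum_add_distrib, Finset.sum_const]
        _ = α * N := by rw [hsum, hNcard, add_zero, nsmul_eq_mul]; ring
    rw [hmcard, ← hs, Finset.sum_boole]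
  have hdvd : C ∣ m * k := by
    by_cases hall : ∀ S, f S = true
    · have hmN : m = N := by
        rw [hmcard, Finset.filter_true_of_mem fun S _ => hall S, hNcard]
      exact ⟨n, by rw [hmN, ← hkey]; ring⟩
    · push_neg at hall
      obtain ⟨S₀, hS₀⟩ := hall
      have hS₀' : f S₀ = false := by
        cases h : f S₀
        · rfl
        · exact absurd h hS₀
      set cnt := (Finset.univ.filter
        (fun T : JDom n k => (S₀.val ∩ T.val).card = k - 1 ∧ f T = true)).card with hcntdef
      have hA0 : ∑ T, A S₀ T = ((k * (n - k) : ℕ) : ℝ) := by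
        calc ∑ T, A S₀ T
            = ∑ T : JDom n k, (if (S₀.val ∩ T.val).card = k - 1 then (1 : ℝ) else 0) :=
              Finset.sum_congr rfl fun T _ => hA S₀ T
          _ = _ := by
              rw [Finset.sum_boole]
              exact_mod_cast congrArg (Nat.cast (R := ℝ))
                (johnson_rowsum hk hkn S₀.val S₀.2).symm
      have hv0 : v S₀ = -α := by
        have h := hf S₀
        rw [hS₀'] at h
        simp only [if_neg Bool.false_ne_true] at h
        linarith [h]
      have hAv : ∑ T, A S₀ T * v T = (((k : ℝ) - 1) * ((n : ℝ) - k - 1) - 1) * v S₀ := by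
        have h := congrFun hEig S₀
        simpa [Matrix.mulVec, dotProduct] using h
      have hcnt : (cnt : ℝ) = α * n := by
        have hsum2 : ∑ T, A S₀ T * (if f T then (1 : ℝ) else 0) = (cnt : ℝ) := by
          calc ∑ T, A S₀ T * (if f T then (1 : ℝ) else 0)
              = ∑ T : JDom n k,
                  (if (S₀.val ∩ T.val).card = k - 1 ∧ f T = true then (1 : ℝ) else 0) := by
                refine Finset.sum_congr rfl fun T _ => ?_
                rw [hA]
                by_cases h1 : (S₀.val ∩ T.val).card = k - 1 <;>
                  by_cases h2 : f T = true <;> simp [h1, h2]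
            _ = (cnt : ℝ) := by rw [Finset.sum_boole]
        have hsum3 : ∑ T, A S₀ T * (if f T then (1 : ℝ) else 0)
            = α * ((k * (n - k) : ℕ) : ℝ) + (((k : ℝ) - 1) * ((n : ℝ) - k - 1) - 1) * v S₀ := by
          calc ∑ T, A S₀ T * (if f T then (1 : ℝ) else 0)
              = ∑ T, A S₀ T * (α + v T) := Finset.sum_congr rfl fun T _ => by rw [hf T]
            _ = α * ∑ T, A S₀ T + ∑ T, A S₀ T * v T := by
                rw [Finset.mul_sum, ← Finset.sum_add_distrib]
                exact Finset.sum_congr rfl fun T _ => by ring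
            _ = _ := by rw [hA0, hAv]
        have hcast : ((k * (n - k) : ℕ) : ℝ) = (k : ℝ) * ((n : ℝ) - (k : ℝ)) := by
          rw [Nat.cast_mul, Nat.cast_sub hkn.le]
        rw [← hsum2, hsum3, hv0, hcast]
        ring
      have hnat : cnt * N = m * n := by
        have hr : ((cnt * N : ℕ) : ℝ) = ((m * n : ℕ) : ℝ) := by
          push_cast
          rw [hcnt, hmr]
          ring
        exact_mod_cast hr
      have heq : m * k = cnt * C := by
        apply Nat.eq_of_mul_eq_mul_left (show 0 < n by omega)
        calc n * (m * k) = (m * n) * k := by ring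
          _ = (cnt * N) * k := by rw [hnat]
          _ = cnt * (N * k) := by ring
          _ = cnt * (n * C) := by rw [hkey]
          _ = n * (cnt * C) := by ring
      exact ⟨cnt, by rw [heq, Nat.mul_comm]⟩
  exact ⟨div_gcd_dvd_of_dvd_mul hCpos hdvd, hdvd⟩
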